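/- arXiv:2604.25108 — 3 statements merged into one kernel-verified Lean document; each statement's English description precedes it below -/
import Mathlib

section
/- For a nonnegative random variable X with E[X^r] < ∞, and with survival function expanded by inclusion-exclusion over the coupon types, the r-th rising moment of the discrete completion time T satisfies the exact finite rational formula: E[T^{(r)}] = r ∑_{∅≠A⊆[N]} (-1)^{|A|+1} ∑_{α∈{0,...,m-1}^A} (p^α/α!) · (|α|+r-1)!/p_A^{|α|+r}, where p_A = ∑_{i∈A} p_i, p^α = ∏_{i∈A} p_i^{α_i}, α! = ∏_{i∈A} α_i!, |α| = ∑_{i∈A} α_i. -/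
open MeasureTheory ProbabilityTheory

/-- `Qm m x = e^{-x} ∑_{a<m} x^a/a!`, the Gamma(m,1) survival function. -/
noncomputable def Qm (m : ℕ) (x : ℝ) : ℝ :=
  Real.exp (-x) * ∑ a ∈ Finset.range m, x ^ a / (Nat.factorial a)

open Set in
private lemma aux_integrable (n : ℕ) {c : ℝ} (hc : 0 < c) :
    IntegrableOn (fun t : ℝ => t ^ n * Real.exp (-(c * t))) (Ioi 0) := by
  have h := integrableOn_rpow_mul_exp_neg_mul_rpow (s := (n : ℝ)) (p := 1)
    (by exact_mod_cast neg_one_lt_zero.trans_le (Nat.cast_nonneg n)) zero_lt_one hc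
  simpa [Real.rpow_natCast, Real.rpow_one, neg_mul] using h

open Set in
private lemma aux_value (n : ℕ) {c : ℝ} (hc : 0 < c) :
    ∫ t in Ioi (0:ℝ), t ^ n * Real.exp (-(c * t)) = (n.factorial : ℝ) / c ^ (n + 1) := by
  have h := Real.integral_rpow_mul_exp_neg_mul_Ioi (a := (n : ℝ) + 1) (r := c)
    (by positivity) hc
  rw [show ((n : ℝ) + 1 - 1) = (n : ℝ) by ring] at h
  have h2 : ∫ t in Ioi (0:ℝ), t ^ ((n : ℝ)) * Real.exp (-(c * t))
      = ∫ t in Ioi (0:ℝ), t ^ n * Real.exp (-(c * t)) := by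
    refine setIntegral_congr_fun measurableSet_Ioi fun t ht => ?_
    rw [Real.rpow_natCast]
  rw [h2] at h
  rw [h, Real.Gamma_nat_eq_factorial,
    show ((n : ℝ) + 1) = ((n + 1 : ℕ) : ℝ) by push_cast; ring, Real.rpow_natCast]
  rw [div_pow, one_pow]
  ring

private lemma incl_excl {ι : Type*} [DecidableEq ι] [Fintype ι] (q : ι → ℝ) :
    1 - ∏ j, (1 - q j)
      = ∑ A ∈ Finset.univ.powerset.filter (fun A : Finset ι => A.Nonempty),
          (-1 : ℝ) ^ (A.card + 1) * ∏ j ∈ A, q j := by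
  have h := Finset.prod_add (fun j => -q j) (fun _ => (1:ℝ)) Finset.univ
  simp only [Finset.prod_const_one, mul_one] at h
  have h' : ∏ j, (1 - q j) = ∑ A ∈ Finset.univ.powerset,
      (-1 : ℝ) ^ A.card * ∏ j ∈ A, q j := by
    rw [show (∏ j, (1 - q j)) = ∏ j, (-q j + 1) from Finset.prod_congr rfl fun j _ => by ring, h]
    refine Finset.sum_congr rfl fun A _ => ?_
    rw [show (∏ i ∈ A, -q i) = ∏ i ∈ A, ((-1) * q i) from
      Finset.prod_congr rfl fun i _ => by ring, Finset.prod_mul_distrib,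
      Finset.prod_const]
  have hsplit := Finset.sum_filter_add_sum_filter_not (Finset.univ.powerset)
    (fun A : Finset ι => A.Nonempty) (fun A => (-1 : ℝ) ^ A.card * ∏ j ∈ A, q j)
  have hempty : Finset.filter (fun A : Finset ι => ¬ A.Nonempty) Finset.univ.powerset
      = {∅} := by
    ext A
    simp [Finset.nonempty_iff_ne_empty]
  rw [hempty] at hsplit
  simp only [Finset.sum_singleton, Finset.card_empty, pow_zero, Finset.prod_empty,
    mul_one, one_mul] at hsplit
  rw [h', ← hsplit,
    Finset.sum_congr rfl (fun A _ => by rw [pow_succ]; ring :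
      ∀ A ∈ Finset.univ.powerset.filter (fun A : Finset ι => A.Nonempty),
        (-1:ℝ)^(A.card+1) * ∏ j ∈ A, q j = -((-1:ℝ)^A.card * ∏ j ∈ A, q j)),
    Finset.sum_neg_distrib]
  ring

private lemma prodQm {ι : Type*} [DecidableEq ι] (m : ℕ) (A : Finset ι) (p : ι → ℝ) (t : ℝ) :
    ∏ j ∈ A, Qm m (p j * t)
      = ∑ α ∈ A.pi (fun _ => Finset.range m),
          ((∏ i ∈ A.attach, (p i.1) ^ (α i.1 i.2)) /
            (∏ i ∈ A.attach, (Nat.factorial (α i.1 i.2) : ℝ))) *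
          (t ^ (∑ i ∈ A.attach, α i.1 i.2) * Real.exp (-((∑ j ∈ A, p j) * t))) := by
  unfold Qm
  rw [Finset.prod_mul_distrib, ← Real.exp_sum]
  rw [show (∑ j ∈ A, -(p j * t)) = -((∑ j ∈ A, p j) * t) by
    rw [Finset.sum_mul, Finset.sum_neg_distrib]]
  rw [Finset.prod_sum, Finset.mul_sum]
  refine Finset.sum_congr rfl fun α hα => ?_
  rw [show (∏ x ∈ A.attach, (p x.1 * t) ^ (α x.1 x.2) / (Nat.factorial (α x.1 x.2) : ℝ))
      = (∏ x ∈ A.attach, (p x.1) ^ (α x.1 x.2) * t ^ (α x.1 x.2)) /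
        (∏ x ∈ A.attach, (Nat.factorial (α x.1 x.2) : ℝ)) by
    rw [← Finset.prod_div_distrib]
    exact Finset.prod_congr rfl fun x _ => by rw [mul_pow]]
  rw [Finset.prod_mul_distrib, Finset.prod_pow_eq_pow_sum]
  ring

private lemma pointwise_expand (N m r : ℕ) (p : Fin N → ℝ) (t : ℝ) :
    (1 - ∏ j, (1 - Qm m (p j * t))) * ((r : ℝ) * t ^ (r - 1))
      = ∑ A ∈ Finset.univ.powerset.filter (fun A : Finset (Fin N) => A.Nonempty),
          ∑ α ∈ A.pi (fun _ => Finset.range m),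
            ((-1:ℝ) ^ (A.card + 1) *
              (((∏ i ∈ A.attach, (p i.1) ^ (α i.1 i.2)) /
                (∏ i ∈ A.attach, (Nat.factorial (α i.1 i.2) : ℝ))) * r))
            * (t ^ ((∑ i ∈ A.attach, α i.1 i.2) + (r - 1)) *
                Real.exp (-((∑ j ∈ A, p j) * t))) := by
  have generic1 : ∀ {κ : Type} (S : Finset κ) (f : κ → ℝ) (g : ℝ),
      (∑ a ∈ S, f a) * g = ∑ a ∈ S, f a * g := fun S f g => Finset.sum_mul S f g
  have generic2 : ∀ {κ : Type} (S : Finset κ) (f : κ → ℝ) (c g : ℝ),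
      (c * ∑ a ∈ S, f a) * g = ∑ a ∈ S, (c * f a) * g := by
    intro κ S f c g
    rw [Finset.mul_sum, Finset.sum_mul]
  rw [incl_excl (fun j => Qm m (p j * t)), generic1]
  refine Finset.sum_congr rfl fun A hA => ?_
  rw [prodQm m A p t, generic2]
  refine Finset.sum_congr rfl fun α hα => ?_
  rw [pow_add]
  ring

open Set in
private lemma layer_cake {Ω : Type*} [MeasureSpace Ω] [IsProbabilityMeasure (ℙ : Measure Ω)]
    (r : ℕ) (hr : 1 ≤ r) (X : Ω → ℝ) (hXmeas : Measurable X) (hXpos : ∀ ω, 0 ≤ X ω)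
    (hXint : Integrable (fun ω => (X ω) ^ r) ℙ) :
    ∫ ω, (X ω) ^ r ∂ℙ
      = ∫ t in Ioi (0:ℝ), (ℙ {ω : Ω | t < X ω}).toReal * ((r : ℝ) * t ^ (r - 1)) := by
  set g : ℝ → ℝ := fun t => (r : ℝ) * t ^ (r - 1) with hg
  have g_cont : Continuous g := continuous_const.mul (continuous_pow _)
  have g_intble : ∀ t > (0:ℝ), IntervalIntegrable g volume 0 t := fun t _ =>
    g_cont.intervalIntegrable 0 t
  have g_nn : ∀ᵐ t ∂(volume.restrict (Ioi (0:ℝ))), 0 ≤ g t := by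
    filter_upwards [self_mem_ae_restrict measurableSet_Ioi] with t ht
    have : (0:ℝ) < t := ht
    positivity
  have key := lintegral_comp_eq_lintegral_meas_lt_mul ℙ
    (Filter.Eventually.of_forall hXpos) hXmeas.aemeasurable g_intble g_nn
  have hint : ∀ x : ℝ, (∫ t in (0:ℝ)..x, g t) = x ^ r := by
    intro x
    rw [hg]
    rw [intervalIntegral.integral_const_mul]
    open intervalIntegral in rw [integral_pow]
    rw [Nat.sub_add_cancel hr, zero_pow (by omega)]
    field_simp
    rw [Nat.cast_sub hr]
    push_cast
    ring
  simp_rw [hint] at key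
  rw [← ofReal_integral_eq_lintegral_ofReal hXint
    (Filter.Eventually.of_forall fun ω => pow_nonneg (hXpos ω) r)] at key
  set F : ℝ → ℝ := fun t => (ℙ {ω : Ω | t < X ω}).toReal * g t with hF
  have F_mble : Measurable F := by
    refine Measurable.mul ?_ g_cont.measurable
    refine Measurable.ennreal_toReal ?_
    exact Antitone.measurable (fun s t hst => measure_mono fun a ha =>
      lt_of_le_of_lt hst ha)
  have hFnn : 0 ≤ᵐ[volume.restrict (Ioi (0:ℝ))] F := by
    filter_upwards [self_mem_ae_restrict measurableSet_Ioi] with t ht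
    have : (0:ℝ) < t := ht
    have : 0 ≤ g t := by rw [hg]; positivity
    exact mul_nonneg ENNReal.toReal_nonneg this
  have hlint : ∫⁻ t in Ioi (0:ℝ), ENNReal.ofReal (F t)
      = ENNReal.ofReal (∫ ω, (X ω) ^ r ∂ℙ) := by
    rw [key]
    refine lintegral_congr_ae ?_
    filter_upwards [self_mem_ae_restrict (measurableSet_Ioi (a := (0:ℝ)))] with t ht
    rw [hF]
    rw [ENNReal.ofReal_mul ENNReal.toReal_nonneg,
      ENNReal.ofReal_toReal (measure_ne_top _ _)]
  have := integral_eq_lintegral_of_nonneg_ae hFnn F_mble.aestronglyMeasurable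
  rw [this, hlint, ENNReal.toReal_ofReal
    (integral_nonneg fun ω => pow_nonneg (hXpos ω) r)]

/-- finite rational formula for the rising moments of the
double Dixie cup completion time `T`. Here `X` is the Poissonized completion
time, with survival function `1 - ∏_j (1 - Qm m (p j t))`, and
`E[X^r] = E[T^{(r)}]`. -/
theorem finite_rational_moment_formula
    {Ω : Type*} [MeasureSpace Ω] [IsProbabilityMeasure (ℙ : Measure Ω)]
    (N m r : ℕ) (hN : 1 ≤ N) (hm : 1 ≤ m) (hr : 1 ≤ r)
    (p : Fin N → ℝ) (hp : ∀ j, 0 < p j) (hsum : ∑ j, p j = 1)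
    (T : Ω → ℕ) (hTmeas : Measurable T) (hT1 : ∀ ω, 1 ≤ T ω)
    (hTint : Integrable (fun ω => ∏ i ∈ Finset.range r, ((T ω : ℝ) + i)) ℙ)
    (X : Ω → ℝ) (hXmeas : Measurable X) (hXpos : ∀ ω, 0 ≤ X ω)
    (hXint : Integrable (fun ω => (X ω) ^ r) ℙ)
    (hSurv : ∀ t : ℝ, 0 ≤ t →
      (ℙ {ω | t < X ω}).toReal = 1 - ∏ j, (1 - Qm m (p j * t)))
    (hTransfer : ∫ ω, (X ω) ^ r ∂ℙ
        = ∫ ω, ∏ i ∈ Finset.range r, ((T ω : ℝ) + i) ∂ℙ) :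
    ∫ ω, ∏ i ∈ Finset.range r, ((T ω : ℝ) + i) ∂ℙ
      = r * ∑ A ∈ Finset.univ.powerset.filter (fun A : Finset (Fin N) => A.Nonempty),
          (-1 : ℝ) ^ (A.card + 1) *
          ∑ α ∈ A.pi (fun _ => Finset.range m),
            ((∏ i ∈ A.attach, (p i.1) ^ (α i.1 i.2)) /
              (∏ i ∈ A.attach, (Nat.factorial (α i.1 i.2) : ℝ))) *
            ((Nat.factorial ((∑ i ∈ A.attach, α i.1 i.2) + r - 1) : ℝ) /
              (∑ i ∈ A, p i) ^ ((∑ i ∈ A.attach, α i.1 i.2) + r)) := by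
  rw [← hTransfer, layer_cake r hr X hXmeas hXpos hXint]
  have hcong : ∫ t in Set.Ioi (0:ℝ),
        (ℙ {ω : Ω | t < X ω}).toReal * ((r : ℝ) * t ^ (r - 1))
      = ∫ t in Set.Ioi (0:ℝ),
          ∑ A ∈ Finset.univ.powerset.filter (fun A : Finset (Fin N) => A.Nonempty),
          ∑ α ∈ A.pi (fun _ => Finset.range m),
            ((-1:ℝ) ^ (A.card + 1) *
              (((∏ i ∈ A.attach, (p i.1) ^ (α i.1 i.2)) /
                (∏ i ∈ A.attach, (Nat.factorial (α i.1 i.2) : ℝ))) * r))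
            * (t ^ ((∑ i ∈ A.attach, α i.1 i.2) + (r - 1)) *
                Real.exp (-((∑ j ∈ A, p j) * t))) := by
    refine setIntegral_congr_fun measurableSet_Ioi fun t ht => ?_
    rw [hSurv t (le_of_lt ht), pointwise_expand]
  rw [hcong]
  have hposA : ∀ A : Finset (Fin N), A.Nonempty → 0 < ∑ j ∈ A, p j :=
    fun A hA => Finset.sum_pos (fun j _ => hp j) hA
  have hintA : ∀ A ∈ Finset.univ.powerset.filter (fun A : Finset (Fin N) => A.Nonempty),
      ∀ α ∈ A.pi (fun _ => Finset.range m),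
      Integrable (fun t : ℝ =>
        ((-1:ℝ) ^ (A.card + 1) *
          (((∏ i ∈ A.attach, (p i.1) ^ (α i.1 i.2)) /
            (∏ i ∈ A.attach, (Nat.factorial (α i.1 i.2) : ℝ))) * r))
        * (t ^ ((∑ i ∈ A.attach, α i.1 i.2) + (r - 1)) *
            Real.exp (-((∑ j ∈ A, p j) * t))))
        (volume.restrict (Set.Ioi (0:ℝ))) := by
    intro A hA α hα
    exact (aux_integrable _ (hposA A (Finset.mem_filter.mp hA).2)).const_mul _
  rw [integral_finset_sum _ (fun A hA => integrable_finset_sum _ (hintA A hA))]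
  rw [Finset.mul_sum]
  refine Finset.sum_congr rfl fun A hA => ?_
  rw [integral_finset_sum _ (hintA A hA), Finset.mul_sum, Finset.mul_sum]
  refine Finset.sum_congr rfl fun α hα => ?_
  rw [integral_const_mul, aux_value _ (hposA A (Finset.mem_filter.mp hA).2)]
  have e1 : (∑ i ∈ A.attach, α i.1 i.2) + (r - 1)
      = (∑ i ∈ A.attach, α i.1 i.2) + r - 1 := by omega
  have e2 : (∑ i ∈ A.attach, α i.1 i.2) + r - 1 + 1
      = (∑ i ∈ A.attach, α i.1 i.2) + r := by omega
  rw [e1, e2]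
  ring
end

section
/- Let F_m(y) = 1 − e^{-y}∑_{k=0}^{m-1} y^k/k! be the Gamma(m,1) CDF and φ(y) = F_m'(y)/F_m(y) its reverse hazard. Then φ is strictly decreasing on (0,∞), and for every constant c > 1 the ratio y ↦ φ(cy)/φ(y) is strictly decreasing on (0,∞). -/
open Real Set

/-- `Fm m y = 1 - e^{-y} ∑_{k<m} y^k/k!`, the Gamma(m,1) CDF. -/
noncomputable def Fm (m : ℕ) (y : ℝ) : ℝ :=
  1 - Real.exp (-y) * ∑ k ∈ Finset.range m, y ^ k / (Nat.factorial k)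

/-- The reverse hazard `φ = Fm' / Fm`. -/
noncomputable def revHazard (m : ℕ) (y : ℝ) : ℝ :=
  deriv (Fm m) y / Fm m y

namespace RevHazardAux

/-- `Em m y = ∑_{k ≥ m} y^k/k!  = e^y Fm m y`. -/
noncomputable def Em (m : ℕ) (y : ℝ) : ℝ := ∑' k : ℕ, y ^ (k + m) / (Nat.factorial (k + m))

lemma summable_em (m : ℕ) (y : ℝ) :
    Summable (fun k : ℕ => y ^ (k + m) / (Nat.factorial (k + m))) :=
  (summable_nat_add_iff m).2 (Real.summable_pow_div_factorial y)

lemma em_pos (m : ℕ) {y : ℝ} (hy : 0 < y) : 0 < Em m y :=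
  Summable.tsum_pos (summable_em m y) (fun k => by positivity) 0 (by positivity)

lemma exp_eq_tsum' (y : ℝ) : Real.exp y = ∑' n : ℕ, y ^ n / (Nat.factorial n) := by
  rw [Real.exp_eq_exp_ℝ, NormedSpace.exp_eq_tsum_div]

lemma fm_eq (m : ℕ) (y : ℝ) : Fm m y = Real.exp (-y) * Em m y := by
  have h : (∑ k ∈ Finset.range m, y ^ k / (Nat.factorial k)) + Em m y = Real.exp y := by
    rw [exp_eq_tsum']
    exact Summable.sum_add_tsum_nat_add m (Real.summable_pow_div_factorial y)
  have hexp : Real.exp (-y) * Real.exp y = 1 := by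
    rw [← Real.exp_add]; simp
  have hs : (∑ k ∈ Finset.range m, y ^ k / (Nat.factorial k)) = Real.exp y - Em m y := by
    linarith
  rw [Fm, hs]
  linear_combination -hexp

lemma hasDerivAt_Fm (m : ℕ) (hm : 1 ≤ m) (y : ℝ) :
    HasDerivAt (Fm m) (Real.exp (-y) * y ^ (m - 1) / (Nat.factorial (m - 1))) y := by
  obtain ⟨n, rfl⟩ : ∃ n, m = n + 1 := ⟨m - 1, (Nat.succ_pred_eq_of_pos hm).symm⟩
  have hS : HasDerivAt (fun y : ℝ => ∑ k ∈ Finset.range (n + 1), y ^ k / (Nat.factorial k))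
      (∑ k ∈ Finset.range (n + 1), ((k : ℝ) * y ^ (k - 1) / (Nat.factorial k))) y :=
    HasDerivAt.fun_sum (fun k _ => (hasDerivAt_pow k y).div_const _)
  have htel : (∑ k ∈ Finset.range (n + 1), ((k : ℝ) * y ^ (k - 1) / (Nat.factorial k)))
      = ∑ k ∈ Finset.range n, y ^ k / (Nat.factorial k) := by
    rw [Finset.sum_range_succ']
    simp only [Nat.cast_zero, zero_mul, zero_div, add_zero]
    refine Finset.sum_congr rfl fun i _ => ?_
    rw [Nat.factorial_succ]
    push_cast
    rw [mul_div_mul_left _ _ (by positivity : ((i : ℝ) + 1) ≠ 0)]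
  have hE : HasDerivAt (fun y : ℝ => Real.exp (-y)) (-Real.exp (-y)) y := by
    simpa using (hasDerivAt_neg y).exp
  have h := ((hE.fun_mul hS).const_sub 1)
  refine h.congr_deriv ?_
  rw [htel, Finset.sum_range_succ]
  simp only [Nat.add_sub_cancel]
  ring

lemma revHazard_eq (m : ℕ) (hm : 1 ≤ m) {y : ℝ} (hy : 0 < y) :
    revHazard m y = y ^ (m - 1) / ((Nat.factorial (m - 1)) * Em m y) := by
  have hd : deriv (Fm m) y = Real.exp (-y) * y ^ (m - 1) / (Nat.factorial (m - 1)) :=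
    (hasDerivAt_Fm m hm y).deriv
  rw [revHazard, hd, fm_eq]
  have hE : (0 : ℝ) < Em m y := em_pos m hy
  have hexp : Real.exp (-y) ≠ 0 := (Real.exp_pos _).ne'
  have hf : ((Nat.factorial (m - 1)) : ℝ) ≠ 0 := by
    exact_mod_cast (Nat.factorial_pos _).ne'
  field_simp

lemma cross1 (m : ℕ) (hm : 1 ≤ m) {y1 y2 : ℝ} (h1 : 0 < y1) (h12 : y1 < y2) :
    y2 ^ (m - 1) * Em m y1 < y1 ^ (m - 1) * Em m y2 := by
  obtain ⟨n, rfl⟩ : ∃ n, m = n + 1 := ⟨m - 1, (Nat.succ_pred_eq_of_pos hm).symm⟩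
  simp only [Nat.add_sub_cancel]
  have h2 : 0 < y2 := h1.trans h12
  rw [Em, Em, ← tsum_mul_left, ← tsum_mul_left]
  have key : ∀ k : ℕ, y2 ^ n * (y1 ^ (k + (n + 1)) / (Nat.factorial (k + (n + 1))))
      < y1 ^ n * (y2 ^ (k + (n + 1)) / (Nat.factorial (k + (n + 1)))) := by
    intro k
    rw [← mul_div_assoc, ← mul_div_assoc, div_lt_div_iff_of_pos_right (by positivity)]
    have hp : y1 ^ (k + 1) < y2 ^ (k + 1) :=
      pow_lt_pow_left₀ h12 h1.le (Nat.succ_ne_zero k)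
    calc y2 ^ n * y1 ^ (k + (n + 1)) = (y1 ^ n * y2 ^ n) * y1 ^ (k + 1) := by
          rw [show k + (n + 1) = n + (k + 1) by omega, pow_add]; ring
      _ < (y1 ^ n * y2 ^ n) * y2 ^ (k + 1) :=
          mul_lt_mul_of_pos_left hp (by positivity)
      _ = y1 ^ n * y2 ^ (k + (n + 1)) := by
          rw [show k + (n + 1) = n + (k + 1) by omega, pow_add]; ring
  exact Summable.tsum_lt_tsum (fun k => (key k).le) (key 0)
    ((summable_em (n + 1) y1).mul_left _) ((summable_em (n + 1) y2).mul_left _)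

lemma cross2 (m : ℕ) {c y1 y2 : ℝ} (hc : 1 < c) (h1 : 0 < y1) (h12 : y1 < y2) :
    Em m y2 * Em m (c * y1) < Em m y1 * Em m (c * y2) := by
  have h2 : 0 < y2 := h1.trans h12
  have hc0 : 0 < c := lt_trans one_pos hc
  set t : ℝ → ℕ → ℝ := fun y k => y ^ (k + m) / (Nat.factorial (k + m)) with ht
  have tnn : ∀ y : ℝ, 0 < y → ∀ k, 0 ≤ t y k := fun y hy k => by
    simp only [ht]; positivity
  have hs : ∀ y : ℝ, Summable (t y) := fun y => summable_em m y
  set F : ℕ × ℕ → ℝ := fun p => t y2 p.1 * t (c * y1) p.2 with hF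
  set G : ℕ × ℕ → ℝ := fun p => t y1 p.1 * t (c * y2) p.2 with hG
  have hsF : Summable F := (hs y2).mul_of_nonneg (hs (c * y1))
    (fun k => tnn y2 h2 k) (fun k => tnn (c * y1) (by positivity) k)
  have hsG : Summable G := (hs y1).mul_of_nonneg (hs (c * y2))
    (fun k => tnn y1 h1 k) (fun k => tnn (c * y2) (by positivity) k)
  have hLHS : Em m y2 * Em m (c * y1) = ∑' p : ℕ × ℕ, F p :=
    Summable.tsum_mul_tsum (hs y2) (hs (c * y1)) hsF
  have hRHS : Em m y1 * Em m (c * y2) = ∑' p : ℕ × ℕ, G p :=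
    Summable.tsum_mul_tsum (hs y1) (hs (c * y2)) hsG
  rw [hLHS, hRHS]
  set D : ℕ × ℕ → ℝ := fun p => G p - F p with hD
  have hsD : Summable D := hsG.sub hsF
  have hsDswap : Summable (fun p : ℕ × ℕ => D p.swap) :=
    (Equiv.prodComm ℕ ℕ).summable_iff.2 hsD
  have hswap_eq : ∑' p : ℕ × ℕ, D p.swap = ∑' p, D p :=
    (Equiv.prodComm ℕ ℕ).tsum_eq D
  have hHval : ∀ p : ℕ × ℕ, D p + D p.swap
      = ((c ^ (p.2 + m) - c ^ (p.1 + m)) *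
          (y1 ^ (p.1 + m) * y2 ^ (p.2 + m) - y2 ^ (p.1 + m) * y1 ^ (p.2 + m)))
        / ((Nat.factorial (p.1 + m)) * (Nat.factorial (p.2 + m))) := by
    rintro ⟨j, k⟩
    simp only [hD, hG, hF, ht, Prod.swap, mul_pow]
    have fj : ((Nat.factorial (j + m)) : ℝ) ≠ 0 := by
      exact_mod_cast (Nat.factorial_pos _).ne'
    have fk : ((Nat.factorial (k + m)) : ℝ) ≠ 0 := by
      exact_mod_cast (Nat.factorial_pos _).ne'
    field_simp
    ring
  have hHnn : ∀ p : ℕ × ℕ, 0 ≤ D p + D p.swap := by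
    rintro ⟨j, k⟩
    rw [hHval ⟨j, k⟩]
    apply div_nonneg _ (by positivity)
    rcases le_total j k with h | h
    · obtain ⟨d, rfl⟩ := Nat.exists_eq_add_of_le h
      have e1 : (c ^ (j + d + m) - c ^ (j + m)) = c ^ (j + m) * (c ^ d - 1) := by
        rw [show j + d + m = (j + m) + d by omega, pow_add]; ring
      have e2 : (y1 ^ (j + m) * y2 ^ (j + d + m) - y2 ^ (j + m) * y1 ^ (j + d + m))
          = (y1 ^ (j + m) * y2 ^ (j + m)) * (y2 ^ d - y1 ^ d) := by
        rw [show j + d + m = (j + m) + d by omega, pow_add, pow_add]; ring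
      rw [e1, e2]
      have hcd : (1 : ℝ) ≤ c ^ d := one_le_pow₀ hc.le
      have hyd : y1 ^ d ≤ y2 ^ d := pow_le_pow_left₀ h1.le h12.le d
      exact mul_nonneg (mul_nonneg (by positivity) (by linarith))
        (mul_nonneg (by positivity) (by linarith))
    · obtain ⟨d, rfl⟩ := Nat.exists_eq_add_of_le h
      have e1 : (c ^ (k + m) - c ^ (k + d + m)) = -(c ^ (k + m) * (c ^ d - 1)) := by
        rw [show k + d + m = (k + m) + d by omega, pow_add]; ring
      have e2 : (y1 ^ (k + d + m) * y2 ^ (k + m) - y2 ^ (k + d + m) * y1 ^ (k + m))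
          = -((y1 ^ (k + m) * y2 ^ (k + m)) * (y2 ^ d - y1 ^ d)) := by
        rw [show k + d + m = (k + m) + d by omega, pow_add, pow_add]; ring
      rw [e1, e2, neg_mul_neg]
      have hcd : (1 : ℝ) ≤ c ^ d := one_le_pow₀ hc.le
      have hyd : y1 ^ d ≤ y2 ^ d := pow_le_pow_left₀ h1.le h12.le d
      exact mul_nonneg (mul_nonneg (by positivity) (by linarith))
        (mul_nonneg (by positivity) (by linarith))
  have hHpos : 0 < D (0, 1) + D ((0, 1) : ℕ × ℕ).swap := by
    rw [hHval (0, 1)]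
    apply div_pos _ (by positivity)
    apply mul_pos
    · have : c ^ (0 + m) < c ^ (1 + m) := by
        apply pow_lt_pow_right₀ hc; omega
      linarith
    · have e2 : (y1 ^ (0 + m) * y2 ^ (1 + m) - y2 ^ (0 + m) * y1 ^ (1 + m))
          = (y1 ^ m * y2 ^ m) * (y2 - y1) := by
        simp only [zero_add, pow_add, pow_succ, pow_one]; ring
      rw [e2]
      exact mul_pos (by positivity) (by linarith)
  have hsum_pos : 0 < ∑' p : ℕ × ℕ, (D p + D p.swap) :=
    Summable.tsum_pos (hsD.add hsDswap) hHnn (0, 1) hHpos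
  have hsplit : ∑' p : ℕ × ℕ, (D p + D p.swap) = (∑' p, D p) + ∑' p : ℕ × ℕ, D p.swap :=
    Summable.tsum_add hsD hsDswap
  have hDpos : 0 < ∑' p, D p := by
    rw [hsplit, hswap_eq] at hsum_pos; linarith
  have hsub : ∑' p, D p = (∑' p, G p) - ∑' p, F p := Summable.tsum_sub hsG hsF
  rw [hsub] at hDpos
  linarith

end RevHazardAux

open RevHazardAux in
/-- the Gamma(m,1) reverse hazard `φ` is strictly decreasing on
`(0,∞)`, and for every `c > 1` the ratio `y ↦ φ(cy)/φ(y)` is strictly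
decreasing on `(0,∞)`. -/
theorem reverse_hazard_ratio_strictAnti (m : ℕ) (hm : 1 ≤ m) :
    StrictAntiOn (revHazard m) (Set.Ioi (0:ℝ)) ∧
    ∀ c : ℝ, 1 < c →
      StrictAntiOn (fun y => revHazard m (c * y) / revHazard m y)
        (Set.Ioi (0:ℝ)) := by
  have hf : (0 : ℝ) < (Nat.factorial (m - 1)) := by
    exact_mod_cast Nat.factorial_pos _
  constructor
  · intro y1 hy1 y2 hy2 h12
    simp only [Set.mem_Ioi] at hy1 hy2
    rw [revHazard_eq m hm hy1, revHazard_eq m hm hy2]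
    have hE1 := em_pos m hy1
    have hE2 := em_pos m hy2
    rw [div_lt_div_iff₀ (by positivity) (by positivity)]
    have := cross1 m hm hy1 h12
    nlinarith [this, hf]
  · intro c hc y1 hy1 y2 hy2 h12
    simp only [Set.mem_Ioi] at hy1 hy2
    have hc0 : 0 < c := lt_trans one_pos hc
    have hE1 := em_pos m hy1
    have hE2 := em_pos m hy2
    have hEc1 := em_pos m (show 0 < c * y1 by positivity)
    have hEc2 := em_pos m (show 0 < c * y2 by positivity)
    have ratio_eq : ∀ y : ℝ, 0 < y →
        revHazard m (c * y) / revHazard m y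
          = c ^ (m - 1) * (Em m y / Em m (c * y)) := by
      intro y hy
      have hEy := em_pos m hy
      have hEcy := em_pos m (show 0 < c * y by positivity)
      rw [revHazard_eq m hm (show 0 < c * y by positivity), revHazard_eq m hm hy]
      rw [mul_pow]
      field_simp
    simp only
    rw [ratio_eq y1 hy1, ratio_eq y2 hy2]
    have hcp : (0 : ℝ) < c ^ (m - 1) := by positivity
    apply mul_lt_mul_of_pos_left _ hcp
    rw [div_lt_div_iff₀ hEc2 hEc1]
    exact cross2 m hc hy1 h12
end

section
/- Fix an integer m ≥ 1 and define b_m(y) = y^m/((m-1)! D_m(y)) + y − (m−1), where D_m(y) = ∑_{n≥m} y^n/n!. Then b_m is strictly increasing on (0,∞), b_m(y) → 1 as y → 0+, and b_m(y) > 1 for all y > 0. -/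
open Real Set Filter

/-- `Dm m y = e^y - ∑_{k<m} y^k/k! = ∑_{n≥m} y^n/n!`. -/
noncomputable def Dm (m : ℕ) (y : ℝ) : ℝ :=
  Real.exp y - ∑ k ∈ Finset.range m, y ^ k / (Nat.factorial k)

/-- `bm m y = y^m/((m-1)! Dm m y) + y - (m-1)`. -/
noncomputable def bm (m : ℕ) (y : ℝ) : ℝ :=
  y ^ m / ((Nat.factorial (m - 1)) * Dm m y) + y - ((m : ℝ) - 1)

lemma exp_tsum (y : ℝ) : Real.exp y = ∑' n : ℕ, y ^ n / (Nat.factorial n) := by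
  rw [Real.exp_eq_exp_ℝ, NormedSpace.exp_eq_tsum_div]

lemma summable_shift (y : ℝ) (m : ℕ) :
    Summable (fun n : ℕ => y ^ (n + m) / (Nat.factorial (n + m))) :=
  (summable_nat_add_iff m).2 (Real.summable_pow_div_factorial y)

lemma Dm_eq (m : ℕ) (y : ℝ) : Dm m y = ∑' n : ℕ, y ^ (n + m) / (Nat.factorial (n + m)) := by
  have h := Summable.sum_add_tsum_nat_add (f := fun n : ℕ => y ^ n / (Nat.factorial n)) m
    (Real.summable_pow_div_factorial y)
  rw [Dm, exp_tsum, ← h]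
  ring

lemma Dm_pos (m : ℕ) {y : ℝ} (hy : 0 < y) : 0 < Dm m y := by
  rw [Dm_eq]
  exact Summable.tsum_pos (summable_shift y m) (fun n => by positivity) 0 (by positivity)

lemma hasDerivAt_Dm (k : ℕ) (y : ℝ) :
    HasDerivAt (Dm (k + 1)) (Dm (k + 1) y + y ^ k / (Nat.factorial k)) y := by
  have hP : HasDerivAt (fun y : ℝ => ∑ i ∈ Finset.range (k + 1), y ^ i / (Nat.factorial i))
      (∑ i ∈ Finset.range (k + 1), (i : ℝ) * y ^ (i - 1) / (Nat.factorial i)) y := by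
    apply HasDerivAt.fun_sum
    intro i _
    exact (hasDerivAt_pow i y).div_const _
  have hsum : (∑ i ∈ Finset.range (k + 1), (i : ℝ) * y ^ (i - 1) / (Nat.factorial i))
      = ∑ i ∈ Finset.range k, y ^ i / (Nat.factorial i) := by
    rw [Finset.sum_range_succ']
    simp only [Nat.cast_zero, zero_mul, zero_div, add_zero]
    apply Finset.sum_congr rfl
    intro i _
    have : (Nat.factorial (i + 1) : ℝ) = (i + 1) * Nat.factorial i := by
      rw [Nat.factorial_succ]; push_cast; ring
    rw [this]
    have hi : (Nat.factorial i : ℝ) ≠ 0 := Nat.cast_ne_zero.2 (Nat.factorial_ne_zero i)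
    field_simp
    rw [Nat.add_sub_cancel]; push_cast; ring
  have h := (Real.hasDerivAt_exp y).sub hP
  rw [hsum] at h
  have heq : Real.exp y - ∑ i ∈ Finset.range k, y ^ i / (Nat.factorial i)
      = Dm (k + 1) y + y ^ k / (Nat.factorial k) := by
    rw [Dm, Finset.sum_range_succ]; ring
  rw [heq] at h
  exact h

lemma fact_spread (t a b : ℕ) (ht : t ≤ a) (hab : a ≤ b) :
    Nat.factorial a * Nat.factorial b ≤ Nat.factorial (a - t) * Nat.factorial (b + t) := by
  induction t with
  | zero => simp
  | succ t ih =>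
    calc Nat.factorial a * Nat.factorial b
        ≤ Nat.factorial (a - t) * Nat.factorial (b + t) := ih (Nat.le_of_succ_le ht)
      _ ≤ Nat.factorial (a - (t + 1)) * Nat.factorial (b + (t + 1)) := by
          have h1 : a - t = (a - (t + 1)) + 1 := by omega
          have h2 : b + (t + 1) = (b + t) + 1 := by omega
          rw [h1, h2, Nat.factorial_succ, Nat.factorial_succ]
          have h3 : (a - (t + 1)) + 1 ≤ (b + t) + 1 := by omega
          calc (a - (t+1) + 1) * Nat.factorial (a - (t+1)) * Nat.factorial (b + t)
              ≤ ((b + t) + 1) * Nat.factorial (a - (t+1)) * Nat.factorial (b + t) :=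
                Nat.mul_le_mul_right _ (Nat.mul_le_mul_right _ h3)
            _ = Nat.factorial (a - (t+1)) * (((b+t)+1) * Nat.factorial (b + t)) := by ring

lemma fact_key (k n i : ℕ) (hi : i ≤ n) :
    Nat.factorial (i + k + 1) * Nat.factorial (n - i + k + 1)
      ≤ Nat.factorial k * Nat.factorial (n + k + 2) := by
  rcases le_total i (n - i) with h | h
  · have := fact_spread (i + 1) (i + k + 1) (n - i + k + 1) (by omega) (by omega)
    have e1 : i + k + 1 - (i + 1) = k := by omega
    have e2 : n - i + k + 1 + (i + 1) = n + k + 2 := by omega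
    rwa [e1, e2] at this
  · have := fact_spread (n - i + 1) (n - i + k + 1) (i + k + 1) (by omega) (by omega)
    have e1 : n - i + k + 1 - (n - i + 1) = k := by omega
    have e2 : i + k + 1 + (n - i + 1) = n + k + 2 := by omega
    rw [e1, e2] at this
    linarith [this]

lemma key_pos (k : ℕ) {y : ℝ} (hy : 0 < y) :
    0 < ((Nat.factorial k : ℝ) * Dm (k+1) y)^2
        + (k+1) * y^k * ((Nat.factorial k : ℝ) * Dm (k+1) y)
        - y^(k+1) * ((Nat.factorial k : ℝ) * Dm (k+1) y) - y^(2*k+1) := by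
  set c : ℝ := (Nat.factorial k : ℝ) with hc
  have hcpos : 0 < c := by positivity
  set a : ℕ → ℝ := fun n => c * (y ^ (n + (k+1)) / (Nat.factorial (n + (k+1)))) with ha
  have ha_nonneg : ∀ n, 0 ≤ a n := fun n => by positivity
  have ha_sum : Summable a := (summable_shift y (k+1)).mul_left c
  have han : Summable fun n => ‖a n‖ := by
    have : (fun n => ‖a n‖) = a := funext fun n => norm_of_nonneg (ha_nonneg n)
    rw [this]; exact ha_sum
  have I_eq : c * Dm (k+1) y = ∑' n, a n := by
    rw [Dm_eq, ← tsum_mul_left]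
  set g : ℕ → ℝ := fun n => c * (n+1) * y^(n + (2*k+2)) / (Nat.factorial (n + k + 2)) with hg
  have hg_nonneg : ∀ n, 0 ≤ g n := fun n => by positivity
  -- step 1: the linear part equals -∑' g
  have e1 : (k+1 : ℝ) * y^k * (c * Dm (k+1) y) - y^(k+1) * (c * Dm (k+1) y) - y^(2*k+1)
      = -∑' n, g n := by
    rw [I_eq]
    have h1 : (k+1 : ℝ) * y^k * (∑' n, a n) = ∑' n, (k+1 : ℝ) * y^k * a n :=
      tsum_mul_left.symm
    have h2 : y^(k+1) * (∑' n, a n) = ∑' n, y^(k+1) * a n :=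
      tsum_mul_left.symm
    have h3 : (∑' n, (k+1 : ℝ) * y^k * a n)
        = (k+1 : ℝ) * y^k * a 0 + ∑' n, (k+1 : ℝ) * y^k * a (n+1) :=
      Summable.tsum_eq_zero_add (ha_sum.mul_left _)
    have h4 : (k+1 : ℝ) * y^k * a 0 = y^(2*k+1) := by
      have : (Nat.factorial (0 + (k+1)) : ℝ) = (k+1) * Nat.factorial k := by
        simp [Nat.factorial_succ]
      rw [ha]
      simp only [this]
      have : (Nat.factorial k : ℝ) ≠ 0 := by positivity
      field_simp
      ring
    have h5 : (∑' n, (k+1 : ℝ) * y^k * a (n+1)) - (∑' n, y^(k+1) * a n) = -∑' n, g n := by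
      have hs1 : Summable (fun n => (k+1 : ℝ) * y^k * a (n+1)) :=
        ((summable_nat_add_iff 1).2 ha_sum).mul_left _
      have hs2 : Summable (fun n => y^(k+1) * a n) := ha_sum.mul_left _
      rw [← Summable.tsum_sub hs1 hs2, ← tsum_neg]
      congr 1
      funext n
      have hfac : (Nat.factorial (n + 1 + (k+1)) : ℝ)
          = (n + k + 2) * (Nat.factorial (n + (k+1))) := by
        have : n + 1 + (k+1) = (n + (k+1)) + 1 := by omega
        rw [this, Nat.factorial_succ]
        push_cast
        ring
      have hfac2 : (Nat.factorial (n + k + 2) : ℝ)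
          = (n + k + 2) * (Nat.factorial (n + (k+1))) := by
        have : n + k + 2 = (n + (k+1)) + 1 := by omega
        rw [this, Nat.factorial_succ]
        push_cast
        ring
      simp only [ha, hg, hfac, hfac2]
      have hp : (Nat.factorial (n + (k+1)) : ℝ) ≠ 0 := by positivity
      have hq : (n : ℝ) + k + 2 ≠ 0 := by positivity
      field_simp
      ring
    rw [h1, h2, h3, h4]
    rw [← h5]
    ring
  -- step 2: Cauchy product
  set F : ℕ → ℝ := fun n => ∑ i ∈ Finset.range (n+1), a i * a (n - i) with hF
  have e2 : (c * Dm (k+1) y)^2 = ∑' n, F n := by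
    rw [I_eq, sq, tsum_mul_tsum_eq_tsum_sum_range_of_summable_norm han han]
  have hFsum : Summable F := by
    have := summable_norm_sum_mul_range_of_summable_norm han han
    exact this.of_norm
  -- step 3: termwise comparison
  have hgF : ∀ n, g n ≤ F n := by
    intro n
    have hterm : ∀ i ∈ Finset.range (n+1),
        c * y^(n + (2*k+2)) / (Nat.factorial (n+k+2)) ≤ a i * a (n - i) := by
      intro i hi
      have hin : i ≤ n := Nat.lt_succ_iff.mp (Finset.mem_range.mp hi)
      have hexp : (i + (k+1)) + ((n - i) + (k+1)) = n + (2*k+2) := by omega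
      have hprod : a i * a (n - i)
          = c * c * y^(n + (2*k+2)) /
            ((Nat.factorial (i + (k+1))) * (Nat.factorial ((n-i) + (k+1)))) := by
        simp only [ha]
        have hy' : y ^ (i+(k+1)) * y ^ (n-i+(k+1)) = y ^ (n+(2*k+2)) := by
          rw [← pow_add, hexp]
        calc c * (y^(i+(k+1)) / (Nat.factorial (i+(k+1)) : ℝ))
              * (c * (y^(n-i+(k+1)) / (Nat.factorial (n-i+(k+1)) : ℝ)))
            = c * c * (y^(i+(k+1)) * y^(n-i+(k+1)))
              / ((Nat.factorial (i+(k+1)) : ℝ) * (Nat.factorial (n-i+(k+1)) : ℝ)) := by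
              ring
          _ = c * c * y^(n + (2*k+2))
              / ((Nat.factorial (i+(k+1)) : ℝ) * (Nat.factorial (n-i+(k+1)) : ℝ)) := by
              rw [hy']
      rw [hprod]
      have hfk := fact_key k n i hin
      have hfk' : (Nat.factorial (i + (k+1)) : ℝ) * (Nat.factorial ((n-i) + (k+1)))
          ≤ (Nat.factorial k : ℝ) * (Nat.factorial (n+k+2)) := by
        have e3 : i + (k+1) = i + k + 1 := by omega
        have e4 : (n-i) + (k+1) = n - i + k + 1 := by omega
        rw [e3, e4]
        exact_mod_cast hfk
      rw [div_le_div_iff₀ (by positivity) (by positivity)]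
      have hyE : (0:ℝ) ≤ c * y^(n + (2*k+2)) := by positivity
      calc c * y^(n + (2*k+2)) * ((Nat.factorial (i + (k+1)) : ℝ) * (Nat.factorial ((n-i) + (k+1))))
          ≤ c * y^(n + (2*k+2)) * ((Nat.factorial k : ℝ) * (Nat.factorial (n+k+2))) :=
            mul_le_mul_of_nonneg_left hfk' hyE
        _ = c * c * y^(n + (2*k+2)) * (Nat.factorial (n+k+2)) := by rw [hc]; ring
    calc g n = (n+1) * (c * y^(n + (2*k+2)) / (Nat.factorial (n+k+2))) := by rw [hg]; ring
      _ = ∑ _i ∈ Finset.range (n+1), c * y^(n + (2*k+2)) / (Nat.factorial (n+k+2)) := by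
          rw [Finset.sum_const, Finset.card_range, nsmul_eq_mul]; push_cast; ring
      _ ≤ F n := Finset.sum_le_sum hterm
  -- step 4: strict at 0
  have hg0 : g 0 < F 0 := by
    have hF0 : F 0 = a 0 * a 0 := by rw [hF]; simp
    have hnat : Nat.factorial (k+1) * Nat.factorial (k+1) < Nat.factorial k * Nat.factorial (k+2) := by
      have h1 : Nat.factorial (k+1) = (k+1) * Nat.factorial k := Nat.factorial_succ k
      have h2 : Nat.factorial (k+2) = (k+2) * Nat.factorial (k+1) := Nat.factorial_succ (k+1)
      rw [h2, h1]
      have : Nat.factorial k * ((k+2) * ((k+1) * Nat.factorial k))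
          = (k+2) * ((Nat.factorial k * (k+1)) * Nat.factorial k) := by ring
      rw [this]
      have hlt : (k+1) < (k+2) := by omega
      have hpos : 0 < (Nat.factorial k * (k+1)) * Nat.factorial k :=
        Nat.mul_pos (Nat.mul_pos (Nat.factorial_pos k) (by omega)) (Nat.factorial_pos k)
      calc (k+1) * Nat.factorial k * ((k+1) * Nat.factorial k)
          = (k+1) * ((Nat.factorial k * (k+1)) * Nat.factorial k) := by ring
        _ < (k+2) * ((Nat.factorial k * (k+1)) * Nat.factorial k) :=
            (Nat.mul_lt_mul_right hpos).mpr hlt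
    have ha0 : a 0 = c * (y^(k+1) / (Nat.factorial (k+1))) := by simp [ha]
    have hg0' : g 0 = c * (0+1) * y^(2*k+2) / (Nat.factorial (k+2)) := by
      simp only [hg]
      norm_num
    have hyy : y^(k+1) * y^(k+1) = y^(2*k+2) := by
      rw [← pow_add]; congr 1; omega
    have hrhs : c * (y ^ (k + 1) / (Nat.factorial (k + 1) : ℝ))
        * (c * (y ^ (k + 1) / (Nat.factorial (k + 1) : ℝ)))
        = c * c * y^(2*k+2) / ((Nat.factorial (k+1) : ℝ) * (Nat.factorial (k+1) : ℝ)) := by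
      rw [← hyy]; ring
    rw [hF0, ha0, hg0', hrhs]
    rw [div_lt_div_iff₀ (by positivity) (by positivity)]
    have hy2 : (0:ℝ) < y^(2*k+2) := by positivity
    have hnat' : (Nat.factorial (k+1) : ℝ) * (Nat.factorial (k+1)) < (Nat.factorial k : ℝ) * (Nat.factorial (k+2)) := by
      exact_mod_cast hnat
    have hc0 : (0:ℝ) < c := hcpos
    calc c * (0+1) * y^(2*k+2) * ((Nat.factorial (k+1):ℝ) * (Nat.factorial (k+1)))
        = (c * y^(2*k+2)) * ((Nat.factorial (k+1):ℝ) * (Nat.factorial (k+1))) := by ring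
      _ < (c * y^(2*k+2)) * ((Nat.factorial k : ℝ) * (Nat.factorial (k+2))) := by
          apply mul_lt_mul_of_pos_left hnat' (by positivity)
      _ = c * c * y^(2*k+2) * (Nat.factorial (k+2)) := by rw [hc]; ring
  -- conclusion
  have hgsum : Summable g := Summable.of_nonneg_of_le hg_nonneg hgF hFsum
  have hlt : ∑' n, g n < ∑' n, F n := Summable.tsum_lt_tsum_of_nonneg hg_nonneg hgF hg0 hFsum
  have : ((c * Dm (k+1) y)^2 + ((k+1) * y^k * (c * Dm (k+1) y)
      - y^(k+1) * (c * Dm (k+1) y) - y^(2*k+1)))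
      = ∑' n, F n - ∑' n, g n := by
    rw [e2]
    have := e1
    linarith [e1]
  linarith [this, hlt]

lemma bm_eq (k : ℕ) : bm (k+1) = fun y =>
    y ^ (k+1) / ((Nat.factorial k : ℝ) * Dm (k+1) y) + y - ((k+1 : ℝ) - 1) := by
  funext y
  simp [bm, Nat.add_sub_cancel]

lemma hasDerivAt_bm (k : ℕ) {y : ℝ} (hy : 0 < y) :
    HasDerivAt (bm (k+1))
      ((((k:ℝ)+1) * y^k * ((Nat.factorial k : ℝ) * Dm (k+1) y)
        - y^(k+1) * ((Nat.factorial k : ℝ) * Dm (k+1) y + y^k))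
        / ((Nat.factorial k : ℝ) * Dm (k+1) y)^2 + 1) y := by
  set c : ℝ := (Nat.factorial k : ℝ) with hc
  have hcpos : (0:ℝ) < c := by positivity
  have hDpos := Dm_pos (k+1) hy
  have hne : c * Dm (k+1) y ≠ 0 := by positivity
  have hden : HasDerivAt (fun y => c * Dm (k+1) y) (c * Dm (k+1) y + y^k) y := by
    have := (hasDerivAt_Dm k y).const_mul c
    have heq : c * (Dm (k+1) y + y ^ k / (Nat.factorial k)) = c * Dm (k+1) y + y^k := by
      rw [hc]; field_simp
    rwa [heq] at this
  have hnum : HasDerivAt (fun y : ℝ => y^(k+1)) (((k:ℝ)+1) * y^k) y := by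
    have := hasDerivAt_pow (k+1) y
    simpa using this
  have hdiv := hnum.div hden hne
  have hall := (hdiv.add (hasDerivAt_id y)).sub_const ((k+1 : ℝ) - 1)
  rw [bm_eq k]
  convert hall using 1
  all_goals rfl

lemma deriv_bm_pos (k : ℕ) {y : ℝ} (hy : 0 < y) : 0 < deriv (bm (k+1)) y := by
  rw [(hasDerivAt_bm k hy).deriv]
  set c : ℝ := (Nat.factorial k : ℝ) with hc
  have hcpos : (0:ℝ) < c := by positivity
  have hDpos := Dm_pos (k+1) hy
  have hne : (0:ℝ) < (c * Dm (k+1) y)^2 := by positivity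
  have hkey := key_pos k hy
  have heq : (((k:ℝ)+1) * y^k * (c * Dm (k+1) y) - y^(k+1) * (c * Dm (k+1) y + y^k))
        / (c * Dm (k+1) y)^2 + 1
      = ((c * Dm (k+1) y)^2 + (k+1) * y^k * (c * Dm (k+1) y)
        - y^(k+1) * (c * Dm (k+1) y) - y^(2*k+1)) / (c * Dm (k+1) y)^2 := by
    field_simp
    ring
  rw [heq]
  exact div_pos hkey hne

lemma bm_mono (k : ℕ) : StrictMonoOn (bm (k+1)) (Set.Ioi (0:ℝ)) := by
  apply strictMonoOn_of_deriv_pos (convex_Ioi 0)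
  · intro y hy
    exact ((hasDerivAt_bm k hy).differentiableAt.continuousAt).continuousWithinAt
  · intro y hy
    rw [interior_Ioi] at hy
    exact deriv_bm_pos k hy

lemma q_summable (k : ℕ) {y : ℝ} (hy : 0 ≤ y) :
    Summable (fun n : ℕ => y ^ n / (Nat.factorial (n + (k+1)))) := by
  apply Summable.of_nonneg_of_le (f := fun n : ℕ => y ^ n / (Nat.factorial n))
    (fun n => by positivity)
  · intro n
    gcongr <;> first | positivity | omega | exact_mod_cast Nat.factorial_le (by omega)
  · exact Real.summable_pow_div_factorial y

lemma Dm_div_tendsto (k : ℕ) :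
    Tendsto (fun y => Dm (k+1) y / y^(k+1)) (nhdsWithin 0 (Set.Ioi (0:ℝ)))
      (nhds (1 / (Nat.factorial (k+1)))) := by
  set C : ℝ := ∑' n : ℕ, (1:ℝ) / (Nat.factorial ((n+1) + (k+1))) with hC
  have hCsum : Summable (fun n : ℕ => (1:ℝ) / (Nat.factorial ((n+1) + (k+1)))) := by
    have := (summable_nat_add_iff (f := fun n : ℕ => (1:ℝ) ^ n / (Nat.factorial (n + (k+1)))) 1).2
      (q_summable k zero_le_one)
    simpa using this
  apply tendsto_of_tendsto_of_tendsto_of_le_of_le'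
    (g := fun _ : ℝ => 1 / (Nat.factorial (k+1) : ℝ))
    (h := fun y : ℝ => 1 / (Nat.factorial (k+1) : ℝ) + C * y)
  · exact tendsto_const_nhds
  · have hcont : Continuous (fun y : ℝ => 1 / (Nat.factorial (k+1) : ℝ) + C * y) := by
      continuity
    have := (hcont.tendsto 0).mono_left (nhdsWithin_le_nhds (s := Set.Ioi (0:ℝ)))
    simpa using this
  · filter_upwards [Ioo_mem_nhdsGT_of_mem (Set.left_mem_Ico.2 zero_lt_one)] with y hy
    have hy0 : 0 < y := hy.1
    have hrep : Dm (k+1) y / y^(k+1) = ∑' n : ℕ, y ^ n / (Nat.factorial (n + (k+1))) := by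
      rw [Dm_eq, ← tsum_div_const]
      congr 1
      funext n
      rw [pow_add]
      field_simp
    have hsplit : (∑' n : ℕ, y ^ n / (Nat.factorial (n + (k+1))))
        = 1 / (Nat.factorial (k+1) : ℝ)
          + ∑' n : ℕ, y ^ (n+1) / (Nat.factorial ((n+1) + (k+1))) := by
      rw [Summable.tsum_eq_zero_add (q_summable k hy0.le)]
      norm_num
    rw [hrep, hsplit]
    have : 0 ≤ ∑' n : ℕ, y ^ (n+1) / (Nat.factorial ((n+1) + (k+1))) :=
      tsum_nonneg (fun n => by positivity)
    linarith
  · filter_upwards [Ioo_mem_nhdsGT_of_mem (Set.left_mem_Ico.2 zero_lt_one)] with y hy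
    have hy0 : 0 < y := hy.1
    have hy1 : y < 1 := hy.2
    have hrep : Dm (k+1) y / y^(k+1) = ∑' n : ℕ, y ^ n / (Nat.factorial (n + (k+1))) := by
      rw [Dm_eq, ← tsum_div_const]
      congr 1
      funext n
      rw [pow_add]
      field_simp
    have hsplit : (∑' n : ℕ, y ^ n / (Nat.factorial (n + (k+1))))
        = 1 / (Nat.factorial (k+1) : ℝ)
          + ∑' n : ℕ, y ^ (n+1) / (Nat.factorial ((n+1) + (k+1))) := by
      rw [Summable.tsum_eq_zero_add (q_summable k hy0.le)]
      norm_num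
    rw [hrep, hsplit]
    have htail : (∑' n : ℕ, y ^ (n+1) / (Nat.factorial ((n+1) + (k+1)))) ≤ C * y := by
      have hsum1 : Summable (fun n : ℕ => y ^ (n+1) / (Nat.factorial ((n+1) + (k+1)))) := by
        have := (summable_nat_add_iff (f := fun n : ℕ => y ^ n / (Nat.factorial (n + (k+1)))) 1).2
          (q_summable k hy0.le)
        simpa using this
      have hle : ∀ n : ℕ, y ^ (n+1) / (Nat.factorial ((n+1) + (k+1)))
          ≤ y * (1 / (Nat.factorial ((n+1) + (k+1)))) := by
        intro n
        rw [div_eq_mul_one_div]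
        apply mul_le_mul_of_nonneg_right _ (by positivity)
        calc y ^ (n+1) ≤ y ^ 1 := pow_le_pow_of_le_one hy0.le hy1.le (by omega)
          _ = y := pow_one y
      calc (∑' n : ℕ, y ^ (n+1) / (Nat.factorial ((n+1) + (k+1))))
          ≤ ∑' n : ℕ, y * (1 / (Nat.factorial ((n+1) + (k+1)))) :=
            Summable.tsum_le_tsum hle hsum1 (hCsum.mul_left y)
        _ = y * C := tsum_mul_left
        _ = C * y := mul_comm _ _
    linarith

lemma bm_tendsto (k : ℕ) :
    Tendsto (bm (k+1)) (nhdsWithin 0 (Set.Ioi (0:ℝ))) (nhds 1) := by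
  set c : ℝ := (Nat.factorial k : ℝ) with hc
  have hcpos : (0:ℝ) < c := by positivity
  have hfne : (Nat.factorial (k+1) : ℝ) ≠ 0 := by positivity
  have hval : c * (1 / (Nat.factorial (k+1) : ℝ)) ≠ 0 := by positivity
  have h1 : Tendsto (fun y => c * (Dm (k+1) y / y^(k+1))) (nhdsWithin 0 (Set.Ioi (0:ℝ)))
      (nhds (c * (1 / (Nat.factorial (k+1) : ℝ)))) := (Dm_div_tendsto k).const_mul c
  have h2 : Tendsto (fun y => 1 / (c * (Dm (k+1) y / y^(k+1))))
      (nhdsWithin 0 (Set.Ioi (0:ℝ))) (nhds ((k:ℝ)+1)) := by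
    have hinv := h1.inv₀ hval
    have hV : (c * (1 / (Nat.factorial (k+1) : ℝ)))⁻¹ = (k:ℝ)+1 := by
      rw [hc]
      have : (Nat.factorial (k+1) : ℝ) = (k+1) * (Nat.factorial k : ℝ) := by
        rw [Nat.factorial_succ]; push_cast; ring
      rw [this]
      have : (Nat.factorial k : ℝ) ≠ 0 := by positivity
      field_simp
    rw [hV] at hinv
    simpa [one_div] using hinv
  have hid : Tendsto (fun y : ℝ => y) (nhdsWithin 0 (Set.Ioi (0:ℝ))) (nhds 0) :=
    tendsto_id.mono_right nhdsWithin_le_nhds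
  have h3 := (h2.add hid).sub_const ((k+1 : ℝ) - 1)
  have h4 : Tendsto (fun y => 1 / (c * (Dm (k+1) y / y^(k+1))) + y - ((k+1 : ℝ) - 1))
      (nhdsWithin 0 (Set.Ioi (0:ℝ))) (nhds 1) := by
    convert h3 using 2
    push_cast
    ring
  apply h4.congr'
  filter_upwards [self_mem_nhdsWithin] with y hy
  have hy0 : (0:ℝ) < y := hy
  have hDpos := Dm_pos (k+1) hy0
  rw [bm_eq k]
  have : c * (Dm (k+1) y / y^(k+1)) = (c * Dm (k+1) y) / y^(k+1) := (mul_div_assoc _ _ _).symm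
  rw [this, one_div_div]

/-- for `m ≥ 1`, `bm` is strictly increasing on `(0,∞)`,
tends to `1` at `0+`, and is `> 1` on `(0,∞)`. -/
theorem bm_strictMono_gt_one (m : ℕ) (hm : 1 ≤ m) :
    StrictMonoOn (bm m) (Set.Ioi (0:ℝ)) ∧
    Tendsto (bm m) (nhdsWithin 0 (Set.Ioi (0:ℝ))) (nhds 1) ∧
    (∀ y : ℝ, 0 < y → 1 < bm m y) := by
  obtain ⟨k, rfl⟩ : ∃ k, m = k + 1 := ⟨m - 1, by omega⟩
  refine ⟨bm_mono k, bm_tendsto k, ?_⟩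
  intro y hy
  have hmono := bm_mono k
  have hz : (0:ℝ) < y/2 := by linarith
  have h1 : bm (k+1) (y/2) < bm (k+1) y :=
    hmono (Set.mem_Ioi.2 hz) (Set.mem_Ioi.2 hy) (by linarith)
  have h2 : (1:ℝ) ≤ bm (k+1) (y/2) := by
    apply le_of_tendsto (bm_tendsto k)
    filter_upwards [Ioo_mem_nhdsGT_of_mem (Set.left_mem_Ico.2 hz)] with t ht
    exact (hmono (Set.mem_Ioi.2 ht.1) (Set.mem_Ioi.2 hz) ht.2).le
  linarith
end
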